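/- Let A be the quadratic closure of the cohomology of Conf(E*,2): the exterior ℂ-algebra on degree-1 generators a₁,b₁,a₂,b₂ modulo the ideal generated by a₁b₂ + a₂b₁, a₁b₁, a₂b₂ (in degree 2), with zero differential. Then the first resonance variety R^1(A) ⊂ ℂ⁴ (coordinates x₁,y₁,x₂,y₂ dual to a₁,b₁,a₂,b₂) is the quadric hypersurface {x₁y₂ - x₂y₁ = 0}. -/
import Mathlib


open Submodule

/-- The grading of the quadratic closure `A` of `H^•(Conf(E*, 2), ℂ)`: the
exterior algebra on degree-1 generators `a₁, b₁, a₂, b₂` modulo the degree-2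
relations `a₁b₂ + a₂b₁ = a₁b₁ = a₂b₂ = 0`; so `A⁰ = ℂ`, `A¹` has basis
`a₁, b₁, a₂, b₂`, `A²` has basis `a₁a₂, a₁b₂, b₁b₂`, and `A^i = 0` for
`i ≥ 3`. -/
def grConf {A : Type} [Ring A] [Algebra ℂ A] (a1 b1 a2 b2 : A) :
    ℕ → Submodule ℂ A
  | 0 => span ℂ {1}
  | 1 => span ℂ {a1, b1, a2, b2}
  | 2 => span ℂ {a1 * a2, a1 * b2, b1 * b2}
  | _ + 3 => ⊥

/-- `H^i(A, δ_ω) ≠ 0`, with `δ_ω` left multiplication by `ω`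
(zero differential). -/
def ResMem {A : Type} [Ring A] [Algebra ℂ A] (𝒜 : ℕ → Submodule ℂ A)
    (ω : A) (i : ℕ) : Prop :=
  ∃ u ∈ 𝒜 i, ω * u = 0 ∧ ∀ v ∈ 𝒜 (i - 1), ω * v ≠ u

/-- let `A` be the exterior `ℂ`-algebra on degree-1 generators
`a₁, b₁, a₂, b₂` modulo the ideal generated by `a₁b₂ + a₂b₁`, `a₁b₁`, `a₂b₂`,
with zero differential.  Then the first resonance variety `R¹(A) ⊆ ℂ⁴`
(coordinates `x₁, y₁, x₂, y₂` dual to `a₁, b₁, a₂, b₂`) is the quadric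
hypersurface `{x₁y₂ - x₂y₁ = 0}`. -/
theorem statement_17 (A : Type) [Ring A] [Algebra ℂ A] (a1 b1 a2 b2 : A)
    (hind : LinearIndependent ℂ
      ![(1 : A), a1, b1, a2, b2, a1 * a2, a1 * b2, b1 * b2])
    (ha1 : a1 * a1 = 0) (hb1 : b1 * b1 = 0)
    (ha2 : a2 * a2 = 0) (hb2 : b2 * b2 = 0)
    (hc1 : b1 * a1 = -(a1 * b1)) (hc2 : a2 * a1 = -(a1 * a2))
    (hc3 : b2 * a1 = -(a1 * b2)) (hc4 : a2 * b1 = -(b1 * a2))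
    (hc5 : b2 * b1 = -(b1 * b2)) (hc6 : b2 * a2 = -(a2 * b2))
    (hrel1 : a1 * b1 = 0) (hrel2 : a2 * b2 = 0)
    (hrel3 : a1 * b2 + a2 * b1 = 0) :
    ∀ x1 y1 x2 y2 : ℂ,
      ResMem (grConf a1 b1 a2 b2)
          (x1 • a1 + y1 • b1 + x2 • a2 + y2 • b2) 1
        ↔ x1 * y2 - x2 * y1 = 0 := by
  -- derived multiplication table
  have hb1a1 : b1 * a1 = 0 := by rw [hc1, hrel1, neg_zero]
  have hb2a2 : b2 * a2 = 0 := by rw [hc6, hrel2, neg_zero]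
  have ha2b1 : a2 * b1 = -(a1 * b2) := eq_neg_of_add_eq_zero_right hrel3
  have hb1a2 : b1 * a2 = a1 * b2 := by
    have h := hc4; rw [ha2b1] at h; exact (neg_injective h).symm
  -- unpacking linear independence
  have hind' : ∀ c0 c1 c2 c3 c4 c5 c6 c7 : ℂ,
      c0 • (1 : A) + c1 • a1 + c2 • b1 + c3 • a2 + c4 • b2 + c5 • (a1 * a2)
        + c6 • (a1 * b2) + c7 • (b1 * b2) = 0 →
      c0 = 0 ∧ c1 = 0 ∧ c2 = 0 ∧ c3 = 0 ∧ c4 = 0 ∧ c5 = 0 ∧ c6 = 0 ∧ c7 = 0 := by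
    intro c0 c1 c2 c3 c4 c5 c6 c7 h
    have h8 := Fintype.linearIndependent_iff.mp hind ![c0, c1, c2, c3, c4, c5, c6, c7]
      (by simpa [Fin.sum_univ_eight] using h)
    exact ⟨h8 0, h8 1, h8 2, h8 3, h8 4, h8 5, h8 6, h8 7⟩
  -- general multiplication formula in degree 1
  have hmul : ∀ p q r s p' q' r' s' : ℂ,
      (p • a1 + q • b1 + r • a2 + s • b2) * (p' • a1 + q' • b1 + r' • a2 + s' • b2)
        = (p * r' - r * p') • (a1 * a2)
          + (p * s' + q * r' - r * q' - s * p') • (a1 * b2)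
          + (q * s' - s * q') • (b1 * b2) := by
    intro p q r s p' q' r' s'
    simp only [add_mul, mul_add, smul_mul_smul_comm, ha1, hb1, ha2, hb2, hrel1, hrel2,
      hb1a1, hb2a2, hc2, hc3, hc5, ha2b1, hb1a2, smul_neg, smul_zero, add_zero, zero_add]
    module
  intro x1 y1 x2 y2
  set ω := x1 • a1 + y1 • b1 + x2 • a2 + y2 • b2 with hω
  constructor
  · -- forward direction
    rintro ⟨u, hu, hωu, hne⟩
    by_contra hΔ
    simp only [grConf, Submodule.mem_span_insert, Submodule.mem_span_singleton] at hu
    obtain ⟨s1, _, ⟨t1, _, ⟨s2, _, ⟨t2, rfl, rfl⟩, rfl⟩, rfl⟩, rfl⟩ := hu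
    -- extract the three equations
    have hflat : ω * (s1 • a1 + t1 • b1 + s2 • a2 + t2 • b2) = 0 := by
      rw [← hωu]; congr 1; module
    rw [hmul] at hflat
    obtain ⟨-, -, -, -, -, e1, e2, e3⟩ := hind' 0 0 0 0 0 _ _ _
      (by simpa only [zero_smul, zero_add] using hflat)
    -- find the scalar c with u = c • ω
    have cancel : ∀ m : ℂ, m * (x1 * y2 - x2 * y1) = 0 → m = 0 := by
      intro m hm
      rcases mul_eq_zero.mp hm with h | h
      · exact h
      · exact absurd h hΔ
    have hm1 : x1 * t1 - y1 * s1 = 0 := cancel _ (by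
      linear_combination (x1*y1) * e2 - x1^2 * e3 - y1^2 * e1)
    have hm3 : x1 * t2 - y2 * s1 = 0 := cancel _ (by
      linear_combination (x1*y2) * e2 - y1*y2 * e1 - x1*x2 * e3)
    have hm4 : x2 * t1 - y1 * s2 = 0 := by linear_combination hm3 - e2
    have hc : ∃ c : ℂ, s1 = c * x1 ∧ t1 = c * y1 ∧ s2 = c * x2 ∧ t2 = c * y2 := by
      by_cases hx1 : x1 = 0
      · have hy1 : y1 ≠ 0 := fun hy1 => hΔ (by rw [hx1, hy1]; ring)
        refine ⟨t1 / y1, ?_, ?_, ?_, ?_⟩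
        · rw [div_mul_eq_mul_div, eq_div_iff hy1]; linear_combination -hm1
        · rw [div_mul_cancel₀ _ hy1]
        · rw [div_mul_eq_mul_div, eq_div_iff hy1]; linear_combination -hm4
        · rw [div_mul_eq_mul_div, eq_div_iff hy1]; linear_combination e3
      · refine ⟨s1 / x1, ?_, ?_, ?_, ?_⟩
        · rw [div_mul_cancel₀ _ hx1]
        · rw [div_mul_eq_mul_div, eq_div_iff hx1]; linear_combination hm1
        · rw [div_mul_eq_mul_div, eq_div_iff hx1]; linear_combination e1
        · rw [div_mul_eq_mul_div, eq_div_iff hx1]; linear_combination hm3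
    obtain ⟨c, hs1, ht1, hs2, ht2⟩ := hc
    refine hne (c • (1 : A)) ?_ ?_
    · exact smul_mem _ c (subset_span rfl)
    · rw [mul_smul_comm, mul_one, hω, hs1, ht1, hs2, ht2]; module
  · -- reverse direction
    intro hΔ
    -- a uniform construction
    have main : ∀ p q r s : ℂ,
        x1 * r - x2 * p = 0 →
        x1 * s + y1 * r - x2 * q - y2 * p = 0 →
        y1 * s - y2 * q = 0 →
        (∀ c : ℂ, ¬(p = c * x1 ∧ q = c * y1 ∧ r = c * x2 ∧ s = c * y2)) →
        ResMem (grConf a1 b1 a2 b2) ω 1 := by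
      intro p q r s h1 h2 h3 hnc
      refine ⟨p • a1 + q • b1 + r • a2 + s • b2, ?_, ?_, ?_⟩
      · show _ ∈ span ℂ {a1, b1, a2, b2}
        refine add_mem (add_mem (add_mem ?_ ?_) ?_) ?_ <;>
          exact smul_mem _ _ (subset_span (by simp))
      · rw [hω, hmul, h1, h2, h3]; simp
      · intro v hv heq
        obtain ⟨c, rfl⟩ := Submodule.mem_span_singleton.mp hv
        rw [mul_smul_comm, mul_one, hω] at heq
        have hcomb : (0:ℂ) • (1:A) + (c * x1 - p) • a1 + (c * y1 - q) • b1
            + (c * x2 - r) • a2 + (c * y2 - s) • b2 + (0:ℂ) • (a1 * a2)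
            + (0:ℂ) • (a1 * b2) + (0:ℂ) • (b1 * b2) = 0 := by
          linear_combination (norm := module) heq
        obtain ⟨-, h1', h2', h3', h4', -, -, -⟩ := hind' _ _ _ _ _ _ _ _ hcomb
        exact hnc c ⟨(sub_eq_zero.mp h1').symm, (sub_eq_zero.mp h2').symm,
          (sub_eq_zero.mp h3').symm, (sub_eq_zero.mp h4').symm⟩
    by_cases hx : x1 = 0 ∧ x2 = 0
    · by_cases hy : y1 = 0 ∧ y2 = 0
      · -- ω = 0 : take u = a1
        refine main 1 0 0 0 (by rw [hx.1, hx.2]; ring) ?_ (by ring) ?_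
        · rw [hx.1, hy.2]; ring
        · rintro c ⟨h, -, -, -⟩
          rw [hx.1, mul_zero] at h
          exact one_ne_zero h
      · -- x1 = x2 = 0, some y ≠ 0 : take u = y1 a1 + y2 a2
        refine main y1 0 y2 0 (by rw [hx.1, hx.2]; ring)
          (by rw [hx.1, hx.2]; ring) (by ring) ?_
        rintro c ⟨h1', -, h3', -⟩
        rw [hx.1, mul_zero] at h1'
        rw [hx.2, mul_zero] at h3'
        exact hy ⟨h1', h3'⟩
    · by_cases hy : y1 = 0 ∧ y2 = 0
      · -- y1 = y2 = 0, some x ≠ 0 : take u = x1 b1 + x2 b2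
        refine main 0 x1 0 x2 (by ring) (by rw [hy.1, hy.2]; ring)
          (by rw [hy.1, hy.2]; ring) ?_
        rintro c ⟨-, h2', -, h4'⟩
        rw [hy.1, mul_zero] at h2'
        rw [hy.2, mul_zero] at h4'
        exact hx ⟨h2', h4'⟩
      · -- some x ≠ 0 and some y ≠ 0 : take u = x1 a1 - y1 b1 + x2 a2 - y2 b2
        refine main x1 (-y1) x2 (-y2) (by ring) (by linear_combination -2 * hΔ)
          (by ring) ?_
        rintro c ⟨h1', h2', h3', h4'⟩
        have hc1' : c = 1 ∨ (x1 = 0 ∧ x2 = 0) := by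
          rcases eq_or_ne x1 0 with h | h
          · rcases eq_or_ne x2 0 with h' | h'
            · exact Or.inr ⟨h, h'⟩
            · refine Or.inl (mul_right_cancel₀ h' ?_)
              rw [one_mul, ← h3']
          · refine Or.inl (mul_right_cancel₀ h ?_)
            rw [one_mul, ← h1']
        have hc2' : c = -1 ∨ (y1 = 0 ∧ y2 = 0) := by
          rcases eq_or_ne y1 0 with h | h
          · rcases eq_or_ne y2 0 with h' | h'
            · exact Or.inr ⟨h, h'⟩
            · refine Or.inl (mul_right_cancel₀ h' ?_)
              rw [neg_one_mul, ← h4']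
          · refine Or.inl (mul_right_cancel₀ h ?_)
            rw [neg_one_mul, ← h2']
        rcases hc1' with h | h
        · rcases hc2' with h' | h'
          · rw [h] at h'; norm_num at h'
          · exact hy h'
        · exact hx h
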